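/- Let G be a finite connected graph with edge weights, and let H be a subgraph of G with the same vertex set such that for every edge e = (u,v) of G, either e is in H or there is a path from u to v in H using only edges of weight at most w(e). Then the minimum spanning tree weight of H equals the minimum spanning tree weight of G. -/

import Mathlib

open SimpleGraph

/-- `T` is a spanning tree of `G`: a subgraph on the same vertex set that is a tree. -/
def IsSpanningTree {V : Type*} (G T : SimpleGraph V) : Prop :=
  T ≤ G ∧ T.IsTree

open Classical in
/-- Total weight of the edges of a graph. -/
noncomputable def treeWeight {V : Type*} [Fintype V] (w : Sym2 V → ℝ)
    (T : SimpleGraph V) : ℝ :=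
  ∑ e ∈ Finset.univ.filter (fun e => e ∈ T.edgeSet), w e

/-- `T` is a minimum spanning tree of the weighted graph `(G, w)`. -/
def IsMST {V : Type*} [Fintype V] (G : SimpleGraph V) (w : Sym2 V → ℝ)
    (T : SimpleGraph V) : Prop :=
  IsSpanningTree G T ∧
    ∀ T' : SimpleGraph V, IsSpanningTree G T' → treeWeight w T ≤ treeWeight w T'

open scoped Classical in
lemma treeWeight_eq_sum_edgeFinset {V : Type*} [Fintype V] (w : Sym2 V → ℝ)
    (T : SimpleGraph V) : treeWeight w T = ∑ e ∈ T.edgeFinset, w e := by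
  rw [treeWeight]
  apply Finset.sum_congr _ (fun _ _ => rfl)
  ext e
  simp [SimpleGraph.mem_edgeFinset]

/-- After deleting an edge `s(u,v)` from a connected graph, every vertex is still
reachable from `u` or from `v`. -/
lemma reach_or_reach_of_walk' {V : Type*} {T : SimpleGraph V} (u v : V) {x z : V}
    (pw : T.Walk x z) :
    (T.deleteEdges {s(u,v)}).Reachable x z ∨ (T.deleteEdges {s(u,v)}).Reachable x u ∨
      (T.deleteEdges {s(u,v)}).Reachable x v := by
  induction pw with
  | nil => exact Or.inl (Reachable.refl _)
  | @cons a b c h q ih =>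
    by_cases hs : s(a, b) = s(u, v)
    · rw [Sym2.eq_iff] at hs
      rcases hs with ⟨rfl, rfl⟩ | ⟨rfl, rfl⟩
      · exact Or.inr (Or.inl (Reachable.refl _))
      · exact Or.inr (Or.inr (Reachable.refl _))
    · have hadj : (T.deleteEdges {s(u,v)}).Adj a b := by
        rw [SimpleGraph.deleteEdges_adj]
        exact ⟨h, by simpa using hs⟩
      refine ih.imp (hadj.reachable.trans) (Or.imp (hadj.reachable.trans) (hadj.reachable.trans))

lemma reach_or_reach_of_walk {V : Type*} {T : SimpleGraph V} {u v x : V}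
    (pw : T.Walk x u) :
    (T.deleteEdges {s(u,v)}).Reachable x u ∨ (T.deleteEdges {s(u,v)}).Reachable x v := by
  rcases reach_or_reach_of_walk' u v pw with h | h | h
  · exact Or.inl h
  · exact Or.inl h
  · exact Or.inr h

/-- A walk starting inside a set `S` and ending outside of it uses an edge crossing `S`. -/
lemma exists_crossing_edge {V : Type*} {H : SimpleGraph V} (S : Set V) {u v : V}
    (p : H.Walk u v) (hu : u ∈ S) (hv : v ∉ S) :
    ∃ x y, x ∈ S ∧ y ∉ S ∧ H.Adj x y ∧ s(x, y) ∈ p.edges := by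
  induction p with
  | nil => exact absurd hu hv
  | @cons a b c h q ih =>
    by_cases hb : b ∈ S
    · obtain ⟨x, y, h1, h2, h3, h4⟩ := ih hb hv
      exact ⟨x, y, h1, h2, h3, List.mem_cons_of_mem _ h4⟩
    · exact ⟨a, b, hu, hb, h, List.mem_cons_self⟩

open scoped Classical in
/-- The key exchange argument: from any spanning tree of `G` we can obtain a spanning
tree of `H` of no larger weight. -/
lemma exists_spanning_tree_of_H {V : Type*} [Fintype V]
    (G H : SimpleGraph V) (hHG : H ≤ G) (w : Sym2 V → ℝ)
    (hcover : ∀ u v : V, G.Adj u v →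
      H.Adj u v ∨ ∃ p : H.Walk u v, ∀ e ∈ p.edges, w e ≤ w s(u, v)) :
    ∀ n (T : SimpleGraph V), IsSpanningTree G T →
      (T.edgeFinset.filter (fun e => e ∉ H.edgeSet)).card = n →
      ∃ T', IsSpanningTree H T' ∧ treeWeight w T' ≤ treeWeight w T := by
  intro n
  induction n using Nat.strong_induction_on with
  | _ n ih =>
    intro T hT hcard
    rcases Nat.eq_zero_or_pos n with h0 | hpos
    · -- all edges of `T` lie in `H`
      subst h0
      have hTH : T ≤ H := by
        intro a b hab
        by_contra hH
        have hmem : s(a, b) ∈ T.edgeFinset.filter (fun e => e ∉ H.edgeSet) := by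
          simp only [Finset.mem_filter, SimpleGraph.mem_edgeFinset, SimpleGraph.mem_edgeSet]
          exact ⟨hab, hH⟩
        rw [Finset.card_eq_zero.mp hcard] at hmem
        exact absurd hmem (Finset.notMem_empty _)
      exact ⟨T, ⟨hTH, hT.2⟩, le_refl _⟩
    · -- pick an edge of `T` not in `H`
      have hne : (T.edgeFinset.filter (fun e => e ∉ H.edgeSet)).Nonempty :=
        Finset.card_pos.mp (hcard ▸ hpos)
      obtain ⟨e, he⟩ := hne
      rw [Finset.mem_filter, SimpleGraph.mem_edgeFinset] at he
      obtain ⟨heT, heH⟩ := he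
      revert heT heH
      induction e using Sym2.ind with
      | _ u v =>
      intro heT heH
      have hTuv : T.Adj u v := T.mem_edgeSet.mp heT
      have hHuv : ¬ H.Adj u v := fun h => heH (H.mem_edgeSet.mpr h)
      have hGuv : G.Adj u v := hT.1 hTuv
      obtain ⟨p, hp⟩ := (hcover u v hGuv).resolve_left hHuv
      set D := T.deleteEdges {s(u, v)} with hD
      -- `s(u,v)` is a bridge of `T`
      have hbridge : ¬ D.Reachable u v := by
        have hb : T.IsBridge s(u, v) :=
          isAcyclic_iff_forall_edge_isBridge.mp hT.2.2 heT
        rw [SimpleGraph.isBridge_iff] at hb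
        exact hb
      have hreach : ∀ z : V, D.Reachable u z ∨ D.Reachable v z := by
        intro z
        obtain ⟨pw⟩ := (hT.2.1.preconnected z u)
        exact (reach_or_reach_of_walk pw).imp Reachable.symm Reachable.symm
      -- find the crossing edge on the path
      obtain ⟨x, y, hxS, hyS, hxy, hmem⟩ :=
        exists_crossing_edge {z | D.Reachable u z} p (Reachable.refl _) hbridge
      have hwf : w s(x, y) ≤ w s(u, v) := hp _ hmem
      have hfH : s(x, y) ∈ H.edgeSet := hxy
      have hfne : s(x, y) ≠ s(u, v) := fun h => heH (h ▸ hfH)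
      have hfT : s(x, y) ∉ T.edgeSet := by
        intro hT'
        have hDxy : D.Adj x y := by
          rw [hD, SimpleGraph.deleteEdges_adj]
          exact ⟨T.mem_edgeSet.mp hT', by simpa using hfne⟩
        exact hyS (hxS.trans hDxy.reachable)
      have hxyne : x ≠ y := hxy.ne
      set T' := D ⊔ edge x y with hT'def
      have hDle : D ≤ T' := le_sup_left
      have hxy' : T'.Adj x y := by
        refine Or.inr ?_
        rw [SimpleGraph.edge_adj]
        exact ⟨Or.inl ⟨rfl, rfl⟩, hxyne⟩
      have hT'edge : T'.edgeSet = insert s(x, y) (T.edgeSet \ {s(u, v)}) := by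
        rw [hT'def, SimpleGraph.edgeSet_sup, SimpleGraph.edge_edgeSet_of_ne hxyne, hD,
          SimpleGraph.edgeSet_deleteEdges, Set.union_singleton]
      -- connectivity of T'
      have hruv : T'.Reachable u v := by
        have h1 : T'.Reachable u x := hxS.mono hDle
        have h2 : T'.Reachable y v :=
          (((hreach y).resolve_left hyS).symm).mono hDle
        exact (h1.trans hxy'.reachable).trans h2
      have hconn : T'.Connected := by
        rw [SimpleGraph.connected_iff]
        refine ⟨?_, ⟨u⟩⟩
        have key : ∀ z : V, T'.Reachable u z := by
          intro z
          rcases hreach z with h | h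
          · exact h.mono hDle
          · exact hruv.trans (h.mono hDle)
        intro a b
        exact (key a).symm.trans (key b)
      -- acyclicity of T'
      have hacyc : T'.IsAcyclic := by
        intro a c hc
        by_cases hfc : s(x, y) ∈ c.edges
        · have hb : T'.IsBridge s(x, y) := by
            rw [SimpleGraph.isBridge_iff]
            intro hre
            have hsub : (T' \ fromEdgeSet {s(x, y)}) ≤ D := by
              intro a' b' hab
              obtain ⟨h1, h2⟩ := hab
              rcases h1 with h1 | h1
              · exact h1
              · rw [SimpleGraph.edge_adj] at h1
                exfalso
                apply h2
                rw [SimpleGraph.fromEdgeSet_adj]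
                refine ⟨?_, h1.2⟩
                rcases h1.1 with ⟨rfl, rfl⟩ | ⟨rfl, rfl⟩
                · exact rfl
                · exact Sym2.eq_swap
            have : D.Reachable x y := hre.mono hsub
            exact hyS (hxS.trans this)
          exact ((isBridge_iff_mem_and_forall_cycle_notMem (c.edges_subset_edgeSet hfc)).mp hb) c hc hfc
        · have hsub : ∀ e' ∈ c.edges, e' ∈ T.edgeSet := by
            intro e' he'
            have h1 := c.edges_subset_edgeSet he'
            rw [hT'edge] at h1
            rcases h1 with h1 | h1
            · exact absurd (h1 ▸ he') hfc
            · exact h1.1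
          exact hT.2.2 (c.transfer T hsub) (hc.transfer hsub)
      have hT'G : T' ≤ G := by
        refine sup_le ((SimpleGraph.deleteEdges_le _).trans hT.1) ?_
        intro a b hab
        rw [SimpleGraph.edge_adj] at hab
        rcases hab.1 with ⟨rfl, rfl⟩ | ⟨rfl, rfl⟩
        · exact hHG hxy
        · exact (hHG hxy).symm
      have hT'tree : IsSpanningTree G T' := ⟨hT'G, ⟨hconn, hacyc⟩⟩
      clear_value T'
      clear hT'def
      -- edge finset of T'
      have hfin : T'.edgeFinset = insert s(x, y) (T.edgeFinset.erase s(u, v)) := by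
        ext e'
        simp only [SimpleGraph.mem_edgeFinset, hT'edge, Set.mem_insert_iff,
          Finset.mem_insert, Finset.mem_erase, Set.mem_diff, Set.mem_singleton_iff]
        tauto
      have hmemT : s(u, v) ∈ T.edgeFinset := mem_edgeFinset.mpr heT
      have hfnotin : s(x, y) ∉ T.edgeFinset.erase s(u, v) := by
        intro h
        exact hfT (mem_edgeFinset.mp (Finset.mem_of_mem_erase h))
      -- count goes down
      have hcard' : (T'.edgeFinset.filter (fun e => e ∉ H.edgeSet)).card = n - 1 := by
        rw [hfin, Finset.filter_insert, if_neg (by simpa using hfH), Finset.filter_erase,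
          Finset.card_erase_of_mem (by
            rw [Finset.mem_filter]
            exact ⟨hmemT, heH⟩), hcard]
      -- weight comparison
      have hweight : treeWeight w T' ≤ treeWeight w T := by
        rw [treeWeight_eq_sum_edgeFinset, treeWeight_eq_sum_edgeFinset, hfin,
          Finset.sum_insert hfnotin, Finset.sum_erase_eq_sub hmemT]
        linarith
      obtain ⟨T'', hsp, hw⟩ := ih (n - 1) (by omega) T' hT'tree hcard'
      exact ⟨T'', hsp, hw.trans hweight⟩

open scoped Classical in
/-- If `H` is a spanning subgraph of a finite connected weighted graph `G` such that for every
edge `(u,v)` of `G`, either `(u,v)` is in `H` or `u` and `v` are joined in `H` by a path using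
only edges of weight at most `w (u,v)`, then the minimum spanning tree weight of `H` equals
that of `G`. -/
theorem mst_weight_eq_of_path_cover {V : Type*} [Fintype V]
    (G H : SimpleGraph V) (hG : G.Connected) (hHG : H ≤ G) (w : Sym2 V → ℝ)
    (hcover : ∀ u v : V, G.Adj u v →
      H.Adj u v ∨ ∃ p : H.Walk u v, ∀ e ∈ p.edges, w e ≤ w s(u, v))
    (TH TG : SimpleGraph V) (h1 : IsMST H w TH) (h2 : IsMST G w TG) :
    treeWeight w TH = treeWeight w TG := by
  refine le_antisymm ?_ ?_
  · -- TH ≤ TG : exchange spanning tree of G into one of H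
    obtain ⟨T', hsp, hw⟩ :=
      exists_spanning_tree_of_H G H hHG w hcover
        ((TG.edgeFinset.filter (fun e => e ∉ H.edgeSet)).card) TG h2.1 rfl
    exact (h1.2 T' hsp).trans hw
  · -- TG ≤ TH : TH is also a spanning tree of G
    exact h2.2 TH ⟨h1.1.1.trans hHG, h1.1.2⟩
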